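/- Let (π₁, π₂) be a chainable pair of patterns with πᵢ = (aᵢ, bᵢ, cᵢ, dᵢ). Then B^{(π₁,π₂)} = { A ∈ ℂ^{(a₁b₁d₁)×(a₂c₂d₂)} : A[i,j] = 0 whenever S_{π₁*π₂}[i,j] = 0, and rank(A[R_P, C_P]) ≤ r(π₁, π₂) for every P ∈ P(S_{π₁}, S_{π₂}) }. In other words, a matrix is a product X₁X₂ of a π₁-factor and a π₂-factor if and only if its support is contained in that of S_{π₁*π₂} and all its blocks A[R_P, C_P] have rank at most r(π₁, π₂). -/

import Mathlib

/-- A *pattern* is a tuple `(a, b, c, d)` of (positive) natural numbers. -/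
structure Pattern where
  a : ℕ
  b : ℕ
  c : ℕ
  d : ℕ

namespace Pattern

/-- The entries of a pattern are positive integers. -/
def Pos (π : Pattern) : Prop := 0 < π.a ∧ 0 < π.b ∧ 0 < π.c ∧ 0 < π.d

/-- Number of rows `a*b*d` of a `π`-factor. -/
def rows (π : Pattern) : ℕ := π.a * π.b * π.d

/-- Number of columns `a*c*d` of a `π`-factor. -/
def cols (π : Pattern) : ℕ := π.a * π.c * π.d

/-- `r(π₁, π₂) = a₁c₁/a₂ (= b₂d₂/d₁)`. -/
def rk (π₁ π₂ : Pattern) : ℕ := π₁.a * π₁.c / π₂.a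

/-- A pair of patterns is *chainable* if `a₁c₁/a₂ = b₂d₂/d₁` is a positive integer,
`a₁ ∣ a₂` and `d₂ ∣ d₁`. -/
def Chainable (π₁ π₂ : Pattern) : Prop :=
  π₂.a ∣ π₁.a * π₁.c ∧ π₁.d ∣ π₂.b * π₂.d ∧
    π₁.a * π₁.c / π₂.a = π₂.b * π₂.d / π₁.d ∧
    0 < π₁.a * π₁.c / π₂.a ∧ π₁.a ∣ π₂.a ∧ π₂.d ∣ π₁.d

/-- `π₁ * π₂ := (a₁, b₁d₁/d₂, a₂c₂/a₁, d₂)`. -/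
instance : Mul Pattern :=
  ⟨fun π₁ π₂ => ⟨π₁.a, π₁.b * π₁.d / π₂.d, π₂.a * π₂.c / π₁.a, π₂.d⟩⟩

/-- `‖π‖₀ := a*b*c*d`. -/
def norm0 (π : Pattern) : ℕ := π.a * π.b * π.c * π.d

end Pattern

open scoped Kronecker

/-- The flattening equivalence `(Fin a × Fin b) × Fin d ≃ Fin (a*b*d)`. -/
def kron3Equiv (a b d : ℕ) : (Fin a × Fin b) × Fin d ≃ Fin (a * b * d) :=
  (finProdFinEquiv.prodCongr (Equiv.refl (Fin d))).trans finProdFinEquiv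

/-- The support matrix `S_π = I_a ⊗ 1_{b×c} ⊗ I_d ∈ {0,1}^{abd × acd}`. -/
def Pattern.S (π : Pattern) : Matrix (Fin π.rows) (Fin π.cols) ℕ :=
  Matrix.reindex (kron3Equiv π.a π.b π.d) (kron3Equiv π.a π.c π.d)
    ((1 : Matrix (Fin π.a) (Fin π.a) ℕ) ⊗ₖ
      (Matrix.of fun _ _ => (1 : ℕ) : Matrix (Fin π.b) (Fin π.c) ℕ) ⊗ₖ
      (1 : Matrix (Fin π.d) (Fin π.d) ℕ))

/-- Reindexing a matrix along equalities of dimensions. -/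
def castMat {α : Type*} {m n m' n' : ℕ} (hm : m = m') (hn : n = n')
    (A : Matrix (Fin m) (Fin n) α) : Matrix (Fin m') (Fin n') α :=
  Matrix.of fun i j => A (Fin.cast hm.symm i) (Fin.cast hn.symm j)

/-- `X` is a `π`-factor: its support is contained in that of `S_π`. -/
def IsFactor (π : Pattern) (X : Matrix (Fin π.rows) (Fin π.cols) ℂ) : Prop :=
  ∀ i j, π.S i j = 0 → X i j = 0

/-- The rank-one contribution support `U_k = L[:,k] ⬝ R[k,:]` of binary matrices `(L, R)`. -/
def contrib {m r n : ℕ} (L : Matrix (Fin m) (Fin r) ℕ) (R : Matrix (Fin r) (Fin n) ℕ)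
    (k : Fin r) : Matrix (Fin m) (Fin n) ℕ :=
  Matrix.of fun i j => L i k * R k j

open scoped Classical in
/-- The equivalence classes `P(L,R)` of the relation `k ∼ k' ↔ U_k = U_k'` on `Fin r`. -/
noncomputable def classes {m r n : ℕ} (L : Matrix (Fin m) (Fin r) ℕ)
    (R : Matrix (Fin r) (Fin n) ℕ) : Finset (Finset (Fin r)) :=
  Finset.image (fun k => Finset.univ.filter fun k' => contrib L R k' = contrib L R k)
    Finset.univ

open scoped Classical in
/-- `R_P`: the set of indices of nonzero rows of the common rank-one support of `P`. -/
noncomputable def rowSupp {m r n : ℕ} (L : Matrix (Fin m) (Fin r) ℕ)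
    (R : Matrix (Fin r) (Fin n) ℕ) (P : Finset (Fin r)) : Finset (Fin m) :=
  Finset.univ.filter fun i => ∃ k ∈ P, ∃ j, contrib L R k i j ≠ 0

open scoped Classical in
/-- `C_P`: the set of indices of nonzero columns of the common rank-one support of `P`. -/
noncomputable def colSupp {m r n : ℕ} (L : Matrix (Fin m) (Fin r) ℕ)
    (R : Matrix (Fin r) (Fin n) ℕ) (P : Finset (Fin r)) : Finset (Fin n) :=
  Finset.univ.filter fun j => ∃ k ∈ P, ∃ i, contrib L R k i j ≠ 0

/-- The submatrix `A[Rs, Cs]`. -/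
def subm {m n : ℕ} (A : Matrix (Fin m) (Fin n) ℂ) (Rs : Finset (Fin m))
    (Cs : Finset (Fin n)) : Matrix Rs Cs ℂ :=
  Matrix.of fun i j => A i.1 j.1


/-! ### Auxiliary lemmas -/

lemma sum_truncate {r t : ℕ} (ht : t ≤ r) (f : Fin r → ℂ)
    (h0 : ∀ q : Fin r, ¬ q.1 < t → f q = 0) :
    ∑ q : Fin r, f q = ∑ p : Fin t, f (Fin.castLE ht p) := by
  have hm := Finset.sum_map Finset.univ (Fin.castLEEmb ht) f
  simp only [Fin.castLEEmb_apply] at hm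
  rw [← hm]
  refine (Finset.sum_subset (Finset.subset_univ _) fun q _ hq => ?_).symm
  refine h0 q fun hlt => hq (Finset.mem_map.2 ⟨⟨q.1, hlt⟩, Finset.mem_univ _, rfl⟩)

open Module in
/-- Any matrix of rank at most `r` factors through `Fin r`. -/
lemma exists_factorization {m n : Type*} [Fintype m] [Fintype n] [DecidableEq n]
    (M : Matrix m n ℂ) (r : ℕ) (h : M.rank ≤ r) :
    ∃ (B : Matrix m (Fin r) ℂ) (C : Matrix (Fin r) n ℂ), M = B * C := by
  classical
  set W := LinearMap.range M.mulVecLin with hW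
  have hfin : finrank ℂ W = M.rank := rfl
  let bas : Basis (Fin (finrank ℂ W)) ℂ W := finBasis ℂ W
  have ht : finrank ℂ W ≤ r := hfin ▸ h
  let colW : n → W := fun j =>
    ⟨M.mulVec (Pi.single j 1), LinearMap.mem_range.2 ⟨Pi.single j 1, rfl⟩⟩
  refine ⟨Matrix.of fun i q => if hq : q.1 < finrank ℂ W then (bas ⟨q.1, hq⟩ : m → ℂ) i else 0,
    Matrix.of fun q j => if hq : q.1 < finrank ℂ W then bas.repr (colW j) ⟨q.1, hq⟩ else 0, ?_⟩
  ext i j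
  rw [Matrix.mul_apply]
  rw [sum_truncate ht _ (fun q hq => by simp only [Matrix.of_apply, dif_neg hq, zero_mul])]
  have h3 : ∀ p : Fin (finrank ℂ W),
      (Matrix.of fun i (q : Fin r) =>
        if hq : q.1 < finrank ℂ W then (bas ⟨q.1, hq⟩ : m → ℂ) i else 0) i (Fin.castLE ht p) *
      (Matrix.of fun (q : Fin r) j =>
        if hq : q.1 < finrank ℂ W then (bas.repr (colW j) ⟨q.1, hq⟩ : ℂ) else 0) (Fin.castLE ht p) j
      = bas.repr (colW j) p • (bas p : m → ℂ) i := by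
    intro p
    have hp : (Fin.castLE ht p).1 < finrank ℂ W := p.2
    simp only [Matrix.of_apply, dif_pos hp, smul_eq_mul]
    have hpe : (⟨(Fin.castLE ht p).1, hp⟩ : Fin (finrank ℂ W)) = p := Fin.ext rfl
    rw [hpe, mul_comm]
  rw [Finset.sum_congr rfl fun p _ => h3 p]
  have h4 : ∑ p : Fin (finrank ℂ W), bas.repr (colW j) p • (bas p : m → ℂ) i
      = ((∑ p : Fin (finrank ℂ W), bas.repr (colW j) p • bas p : W) : m → ℂ) i := by
    rw [Submodule.coe_sum]
    simp [Finset.sum_apply]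
  rw [h4, bas.sum_repr (colW j)]
  symm
  show (M.mulVec (Pi.single j 1)) i = M i j
  simp

/-! ### Arithmetic helpers -/

lemma nat_block_lt {q a s X : ℕ} (hq : q < a) (hs : s < X) : q * X + s < a * X := by
  calc q * X + s < q * X + X := by omega
  _ = (q + 1) * X := by ring
  _ ≤ a * X := Nat.mul_le_mul_right X hq

lemma nat_block_div {q s X : ℕ} (hs : s < X) : (q * X + s) / X = q := by
  rw [mul_comm, Nat.mul_add_div (by omega), Nat.div_eq_of_lt hs, add_zero]

lemma nat_block_mod {q s X Y : ℕ} (h : Y ∣ X) : (q * X + s) % Y = s % Y := by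
  obtain ⟨k, rfl⟩ := h
  rw [show q * (Y * k) = (q * k) * Y by ring, add_comm, Nat.add_mul_mod_self_right]

/-- The support condition at the level of natural-number indices. -/
def scond (b c d i j : ℕ) : Prop := i / d / b = j / d / c ∧ i % d = j % d

instance (b c d i j : ℕ) : Decidable (scond b c d i j) := by unfold scond; infer_instance

lemma scond_iff (b c d i j : ℕ) :
    scond b c d i j ↔ (i / (b * d) = j / (c * d) ∧ i % d = j % d) := by
  unfold scond
  rw [Nat.div_div_eq_div_mul, Nat.div_div_eq_div_mul, mul_comm d b, mul_comm d c]

lemma scond_wit {a b c d x : ℕ} (hb : 0 < b) (hd : 0 < d) (hx : x < a * c * d) :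
    ∃ y, y < a * b * d ∧ scond b c d y x := by
  have hc : 0 < c := by
    rcases Nat.eq_zero_or_pos c with h | h
    · subst h; simp at hx
    · exact h
  have hcd : 0 < c * d := Nat.mul_pos hc hd
  have hq : x / (c * d) < a := by
    rw [Nat.div_lt_iff_lt_mul hcd]
    exact lt_of_lt_of_eq hx (mul_assoc a c d)
  have hs : x % d < b * d :=
    lt_of_lt_of_le (Nat.mod_lt x hd) (Nat.le_mul_of_pos_left d hb)
  refine ⟨x / (c * d) * (b * d) + x % d, ?_, ?_⟩
  · rw [mul_assoc]
    exact nat_block_lt hq hs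
  · rw [scond_iff]
    refine ⟨?_, ?_⟩
    · exact nat_block_div hs
    · rw [nat_block_mod (dvd_mul_left d b)]
      exact Nat.mod_mod_of_dvd x (dvd_refl d)

lemma S_apply (π : Pattern) (i : Fin π.rows) (j : Fin π.cols) :
    π.S i j = if scond π.b π.c π.d i.1 j.1 then 1 else 0 := by
  revert i j
  show ∀ (i : Fin (π.a * π.b * π.d)) (j : Fin (π.a * π.c * π.d)),
    π.S i j = if scond π.b π.c π.d i.1 j.1 then 1 else 0
  intro i j
  unfold Pattern.S kron3Equiv scond
  simp only [Matrix.reindex_apply, Equiv.symm_trans_apply, Equiv.prodCongr_symm,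
    Equiv.refl_symm, Equiv.prodCongr_apply, Equiv.coe_refl, Prod.map,
    finProdFinEquiv_symm_apply, Matrix.submatrix_apply, Matrix.kroneckerMap_apply,
    Matrix.of_apply, Matrix.one_apply, Fin.divNat, Fin.modNat, id]
  by_cases h1 : (i : ℕ) / π.d / π.b = (j : ℕ) / π.d / π.c <;>
    by_cases h2 : (i : ℕ) % π.d = (j : ℕ) % π.d <;>
      simp [h1, h2, Fin.ext_iff]

lemma S_eq_zero (π : Pattern) (i : Fin π.rows) (j : Fin π.cols) :
    π.S i j = 0 ↔ ¬ scond π.b π.c π.d i.1 j.1 := by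
  rw [S_apply]; split <;> simp [*]

/-! ### The middle support matrix and entry characterizations -/

/-- The recast second support matrix. -/
def S2 (π₁ π₂ : Pattern) (hdim : π₁.cols = π₂.rows) :
    Matrix (Fin π₁.cols) (Fin π₂.cols) ℕ := castMat hdim.symm rfl π₂.S

lemma S2_apply (π₁ π₂ : Pattern) (hdim : π₁.cols = π₂.rows) (m : Fin π₁.cols)
    (l : Fin π₂.cols) :
    S2 π₁ π₂ hdim m l = if scond π₂.b π₂.c π₂.d m.1 l.1 then 1 else 0 :=
  S_apply π₂ (Fin.cast hdim m) l

lemma S2_eq_zero (π₁ π₂ : Pattern) (hdim : π₁.cols = π₂.rows) (m : Fin π₁.cols)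
    (l : Fin π₂.cols) :
    S2 π₁ π₂ hdim m l = 0 ↔ ¬ scond π₂.b π₂.c π₂.d m.1 l.1 :=
  S_eq_zero π₂ (Fin.cast hdim m) l

lemma contrib_ne (π₁ π₂ : Pattern) (hdim : π₁.cols = π₂.rows) (m : Fin π₁.cols)
    (i : Fin π₁.rows) (l : Fin π₂.cols) :
    contrib π₁.S (S2 π₁ π₂ hdim) m i l ≠ 0 ↔
      scond π₁.b π₁.c π₁.d i.1 m.1 ∧ scond π₂.b π₂.c π₂.d m.1 l.1 := by
  show π₁.S i m * S2 π₁ π₂ hdim m l ≠ 0 ↔ _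
  rw [mul_ne_zero_iff, ne_eq, ne_eq, S_eq_zero, S2_eq_zero, not_not, not_not]

/-! ### Numeric consequences of chainability -/

lemma hABD (π₁ π₂ : Pattern) (hdim : π₁.cols = π₂.rows) :
    π₁.a * π₁.c * π₁.d = π₂.a * π₂.b * π₂.d := hdim

lemma rk_mul_d1 (π₁ π₂ : Pattern) (hch : π₁.Chainable π₂) :
    Pattern.rk π₁ π₂ * π₁.d = π₂.b * π₂.d := by
  rw [Pattern.rk, hch.2.2.1]
  exact Nat.div_mul_cancel hch.2.1

lemma bd_pos (π₁ π₂ : Pattern) (h₁ : π₁.Pos) (hch : π₁.Chainable π₂) :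
    0 < π₂.b * π₂.d := by
  rw [← rk_mul_d1 π₁ π₂ hch]
  exact Nat.mul_pos hch.2.2.2.1 h₁.2.2.2

lemma c1d1 (π₁ π₂ : Pattern) (h₁ : π₁.Pos) (hch : π₁.Chainable π₂)
    (hdim : π₁.cols = π₂.rows) :
    π₁.c * π₁.d = (π₂.b * π₂.d) * (π₂.a / π₁.a) := by
  have ha : π₁.a * (π₂.a / π₁.a) = π₂.a := Nat.mul_div_cancel' hch.2.2.2.2.1
  have h := hABD π₁ π₂ hdim
  refine Nat.eq_of_mul_eq_mul_left h₁.1 ?_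
  calc π₁.a * (π₁.c * π₁.d) = π₁.a * π₁.c * π₁.d := (mul_assoc _ _ _).symm
  _ = π₂.a * π₂.b * π₂.d := h
  _ = (π₁.a * (π₂.a / π₁.a)) * π₂.b * π₂.d := by rw [ha]
  _ = π₁.a * (π₂.b * π₂.d * (π₂.a / π₁.a)) := by ring

lemma d2_dvd_bd (π₁ π₂ : Pattern) (hch : π₁.Chainable π₂) : π₂.d ∣ π₂.b * π₂.d :=
  dvd_mul_left _ _

lemma d1_dvd_bd (π₁ π₂ : Pattern) (hch : π₁.Chainable π₂) : π₁.d ∣ π₂.b * π₂.d :=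
  hch.2.1

/-- The class key of a middle index: `(k₁, j₃)`. -/
def keyf (π₁ π₂ : Pattern) (m : ℕ) : ℕ × ℕ := (m / (π₂.b * π₂.d), m % π₁.d)

lemma div_c1d1_of_key (π₁ π₂ : Pattern) (h₁ : π₁.Pos) (hch : π₁.Chainable π₂)
    (hdim : π₁.cols = π₂.rows) (m : ℕ) :
    m / (π₁.c * π₁.d) = m / (π₂.b * π₂.d) / (π₂.a / π₁.a) := by
  rw [c1d1 π₁ π₂ h₁ hch hdim, ← Nat.div_div_eq_div_mul]

lemma scond_congr_left (π₁ π₂ : Pattern) (h₁ : π₁.Pos) (hch : π₁.Chainable π₂)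
    (hdim : π₁.cols = π₂.rows) {m m' : ℕ} (hk : keyf π₁ π₂ m = keyf π₁ π₂ m') (i : ℕ) :
    scond π₁.b π₁.c π₁.d i m ↔ scond π₁.b π₁.c π₁.d i m' := by
  have hk1 : m / (π₂.b * π₂.d) = m' / (π₂.b * π₂.d) := congrArg Prod.fst hk
  have h1 : m / (π₁.c * π₁.d) = m' / (π₁.c * π₁.d) := by
    rw [div_c1d1_of_key π₁ π₂ h₁ hch hdim, div_c1d1_of_key π₁ π₂ h₁ hch hdim, hk1]
  have h2 : m % π₁.d = m' % π₁.d := congrArg Prod.snd hk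
  rw [scond_iff, scond_iff, h1, h2]

lemma scond_congr_right (π₁ π₂ : Pattern) (hch : π₁.Chainable π₂)
    {m m' : ℕ} (hk : keyf π₁ π₂ m = keyf π₁ π₂ m') (l : ℕ) :
    scond π₂.b π₂.c π₂.d m l ↔ scond π₂.b π₂.c π₂.d m' l := by
  have h1 : m / (π₂.b * π₂.d) = m' / (π₂.b * π₂.d) := congrArg Prod.fst hk
  have h2' : m % π₁.d = m' % π₁.d := congrArg Prod.snd hk
  have h2 : m % π₂.d = m' % π₂.d := by
    rw [← Nat.mod_mod_of_dvd m hch.2.2.2.2.2, ← Nat.mod_mod_of_dvd m' hch.2.2.2.2.2, h2']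
  rw [scond_iff, scond_iff, h1, h2]

/-! ### Witnesses -/

lemma wit_row (π₁ π₂ : Pattern) (h₁ : π₁.Pos) (m : Fin π₁.cols) :
    ∃ i : Fin π₁.rows, scond π₁.b π₁.c π₁.d i.1 m.1 := by
  obtain ⟨y, hy, hsc⟩ := scond_wit (a := π₁.a) h₁.2.1 h₁.2.2.2 m.2
  exact ⟨⟨y, hy⟩, hsc⟩

lemma wit_col (π₁ π₂ : Pattern) (h₂ : π₂.Pos) (hdim : π₁.cols = π₂.rows)
    (m : Fin π₁.cols) :
    ∃ l : Fin π₂.cols, scond π₂.b π₂.c π₂.d m.1 l.1 := by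
  have hx : m.1 < π₂.a * π₂.b * π₂.d := lt_of_lt_of_eq m.2 hdim
  obtain ⟨y, hy, hsc⟩ := scond_wit (a := π₂.a) (b := π₂.c) (c := π₂.b)
    h₂.2.2.1 h₂.2.2.2 hx
  exact ⟨⟨y, hy⟩, hsc.1.symm, hsc.2.symm⟩

lemma contrib_eq_iff (π₁ π₂ : Pattern) (h₁ : π₁.Pos) (h₂ : π₂.Pos)
    (hch : π₁.Chainable π₂) (hdim : π₁.cols = π₂.rows) (m m' : Fin π₁.cols) :
    contrib π₁.S (S2 π₁ π₂ hdim) m = contrib π₁.S (S2 π₁ π₂ hdim) m' ↔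
      keyf π₁ π₂ m.1 = keyf π₁ π₂ m'.1 := by
  constructor
  · intro h
    obtain ⟨i, hi⟩ := wit_row π₁ π₂ h₁ m
    obtain ⟨l, hl⟩ := wit_col π₁ π₂ h₂ hdim m
    have hne : contrib π₁.S (S2 π₁ π₂ hdim) m i l ≠ 0 :=
      (contrib_ne π₁ π₂ hdim m i l).2 ⟨hi, hl⟩
    have hne' : contrib π₁.S (S2 π₁ π₂ hdim) m' i l ≠ 0 := by rw [← h]; exact hne
    obtain ⟨hi', hl'⟩ := (contrib_ne π₁ π₂ hdim m' i l).1 hne'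
    have e1 : m.1 / (π₂.b * π₂.d) = m'.1 / (π₂.b * π₂.d) := by
      have a1 := (scond_iff _ _ _ _ _).1 hl
      have a2 := (scond_iff _ _ _ _ _).1 hl'
      rw [a1.1, ← a2.1]
    have e2 : m.1 % π₁.d = m'.1 % π₁.d := by rw [← hi.2, hi'.2]
    exact Prod.ext e1 e2
  · intro hk
    ext i l
    show π₁.S i m * S2 π₁ π₂ hdim m l = π₁.S i m' * S2 π₁ π₂ hdim m' l
    rw [S_apply, S_apply, S2_apply, S2_apply,
      if_congr (scond_congr_left π₁ π₂ h₁ hch hdim hk i.1) rfl rfl,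
      if_congr (scond_congr_right π₁ π₂ hch hk l.1) rfl rfl]

/-! ### Equivalence classes -/

/-- The class of a middle index. -/
def Pof (π₁ π₂ : Pattern) (hdim : π₁.cols = π₂.rows) (m : Fin π₁.cols) :
    Finset (Fin π₁.cols) :=
  Finset.univ.filter fun k' =>
    contrib π₁.S (S2 π₁ π₂ hdim) k' = contrib π₁.S (S2 π₁ π₂ hdim) m

lemma Pof_mem_classes (π₁ π₂ : Pattern) (hdim : π₁.cols = π₂.rows) (m : Fin π₁.cols) :
    Pof π₁ π₂ hdim m ∈ classes π₁.S (S2 π₁ π₂ hdim) := by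
  unfold classes Pof
  refine Finset.mem_image.2 ⟨m, Finset.mem_univ m, ?_⟩
  congr 1

lemma classes_eq_Pof (π₁ π₂ : Pattern) (hdim : π₁.cols = π₂.rows) :
    ∀ P ∈ classes π₁.S (S2 π₁ π₂ hdim), ∃ m, P = Pof π₁ π₂ hdim m := by
  intro P hP
  obtain ⟨m, _, hm⟩ := Finset.mem_image.1 hP
  refine ⟨m, ?_⟩
  rw [← hm]
  unfold Pof
  congr 1

lemma mem_Pof (π₁ π₂ : Pattern) (h₁ : π₁.Pos) (h₂ : π₂.Pos) (hch : π₁.Chainable π₂)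
    (hdim : π₁.cols = π₂.rows) (m₀ m : Fin π₁.cols) :
    m ∈ Pof π₁ π₂ hdim m₀ ↔ keyf π₁ π₂ m.1 = keyf π₁ π₂ m₀.1 := by
  unfold Pof
  rw [Finset.mem_filter]
  simp only [Finset.mem_univ, true_and]
  exact contrib_eq_iff π₁ π₂ h₁ h₂ hch hdim m m₀

lemma Pof_self (π₁ π₂ : Pattern) (hdim : π₁.cols = π₂.rows) (m : Fin π₁.cols) :
    m ∈ Pof π₁ π₂ hdim m := by
  unfold Pof
  simp

lemma Pof_congr (π₁ π₂ : Pattern) (hdim : π₁.cols = π₂.rows) {m₀ m : Fin π₁.cols}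
    (h : m ∈ Pof π₁ π₂ hdim m₀) : Pof π₁ π₂ hdim m = Pof π₁ π₂ hdim m₀ := by
  have hc : contrib π₁.S (S2 π₁ π₂ hdim) m = contrib π₁.S (S2 π₁ π₂ hdim) m₀ :=
    (Finset.mem_filter.1 h).2
  unfold Pof
  rw [hc]

/-! ### Row and column supports -/

lemma mem_rowSupp (π₁ π₂ : Pattern) (h₂ : π₂.Pos) (hdim : π₁.cols = π₂.rows)
    (P : Finset (Fin π₁.cols)) (i : Fin π₁.rows) :
    i ∈ rowSupp π₁.S (S2 π₁ π₂ hdim) P ↔ ∃ m ∈ P, scond π₁.b π₁.c π₁.d i.1 m.1 := by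
  unfold rowSupp
  rw [Finset.mem_filter]
  simp only [Finset.mem_univ, true_and]
  constructor
  · rintro ⟨m, hm, j, hj⟩
    exact ⟨m, hm, ((contrib_ne π₁ π₂ hdim m i j).1 hj).1⟩
  · rintro ⟨m, hm, hs⟩
    obtain ⟨l, hl⟩ := wit_col π₁ π₂ h₂ hdim m
    exact ⟨m, hm, l, (contrib_ne π₁ π₂ hdim m i l).2 ⟨hs, hl⟩⟩

lemma mem_colSupp (π₁ π₂ : Pattern) (h₁ : π₁.Pos) (hdim : π₁.cols = π₂.rows)
    (P : Finset (Fin π₁.cols)) (l : Fin π₂.cols) :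
    l ∈ colSupp π₁.S (S2 π₁ π₂ hdim) P ↔ ∃ m ∈ P, scond π₂.b π₂.c π₂.d m.1 l.1 := by
  unfold colSupp
  rw [Finset.mem_filter]
  simp only [Finset.mem_univ, true_and]
  constructor
  · rintro ⟨m, hm, i, hi⟩
    exact ⟨m, hm, ((contrib_ne π₁ π₂ hdim m i l).1 hi).2⟩
  · rintro ⟨m, hm, hs⟩
    obtain ⟨i, hi⟩ := wit_row π₁ π₂ h₁ m
    exact ⟨m, hm, i, (contrib_ne π₁ π₂ hdim m i l).2 ⟨hi, hs⟩⟩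

/-! ### The index within a class, and the enumeration of a class -/

/-- Index of a middle index within its class. -/
def idxval (π₁ π₂ : Pattern) (m : ℕ) : ℕ := m % (π₂.b * π₂.d) / π₁.d

lemma idxval_lt (π₁ π₂ : Pattern) (h₁ : π₁.Pos) (hch : π₁.Chainable π₂) (m : ℕ) :
    idxval π₁ π₂ m < Pattern.rk π₁ π₂ := by
  have hbd : 0 < π₂.b * π₂.d := bd_pos π₁ π₂ h₁ hch
  have h1 : m % (π₂.b * π₂.d) < π₂.b * π₂.d := Nat.mod_lt _ hbd
  have h2 := Nat.div_lt_div_of_lt_of_dvd (hch.2.1) h1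
  unfold idxval
  rw [Pattern.rk, hch.2.2.1]
  exact h2

lemma key_idx_decomp (π₁ π₂ : Pattern) (hch : π₁.Chainable π₂) (m : ℕ) :
    m = (m / (π₂.b * π₂.d)) * (π₂.b * π₂.d) + (idxval π₁ π₂ m * π₁.d + m % π₁.d) := by
  have e1 : π₂.b * π₂.d * (m / (π₂.b * π₂.d)) + m % (π₂.b * π₂.d) = m :=
    Nat.div_add_mod m _
  have e2 : π₁.d * (m % (π₂.b * π₂.d) / π₁.d) + m % (π₂.b * π₂.d) % π₁.d
      = m % (π₂.b * π₂.d) := Nat.div_add_mod _ _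
  have e3 : m % (π₂.b * π₂.d) % π₁.d = m % π₁.d := Nat.mod_mod_of_dvd m hch.2.1
  unfold idxval
  calc m = π₂.b * π₂.d * (m / (π₂.b * π₂.d)) + m % (π₂.b * π₂.d) := e1.symm
  _ = π₂.b * π₂.d * (m / (π₂.b * π₂.d))
      + (π₁.d * (m % (π₂.b * π₂.d) / π₁.d) + m % (π₂.b * π₂.d) % π₁.d) := by rw [e2]
  _ = π₂.b * π₂.d * (m / (π₂.b * π₂.d))
      + (π₁.d * (m % (π₂.b * π₂.d) / π₁.d) + m % π₁.d) := by rw [e3]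
  _ = (m / (π₂.b * π₂.d)) * (π₂.b * π₂.d)
      + (m % (π₂.b * π₂.d) / π₁.d * π₁.d + m % π₁.d) := by ring

/-- The natural-number value of the `t`-th element of the class with key `(k₁, j₃)`. -/
def mfromval (π₁ π₂ : Pattern) (k₁ j₃ t : ℕ) : ℕ := k₁ * (π₂.b * π₂.d) + (t * π₁.d + j₃)

lemma mfromval_inner_lt (π₁ π₂ : Pattern) (hch : π₁.Chainable π₂) {j₃ t : ℕ}
    (hj : j₃ < π₁.d) (ht : t < Pattern.rk π₁ π₂) : t * π₁.d + j₃ < π₂.b * π₂.d := by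
  rw [← rk_mul_d1 π₁ π₂ hch]
  exact nat_block_lt ht hj

lemma mfromval_lt (π₁ π₂ : Pattern) (hch : π₁.Chainable π₂) (hdim : π₁.cols = π₂.rows)
    {k₁ j₃ t : ℕ} (hk : k₁ < π₂.a) (hj : j₃ < π₁.d) (ht : t < Pattern.rk π₁ π₂) :
    mfromval π₁ π₂ k₁ j₃ t < π₁.cols := by
  have h := nat_block_lt hk (mfromval_inner_lt π₁ π₂ hch hj ht)
  show mfromval π₁ π₂ k₁ j₃ t < π₁.a * π₁.c * π₁.d
  rw [hABD π₁ π₂ hdim, mul_assoc]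
  exact h

lemma keyf_mfromval (π₁ π₂ : Pattern) (hch : π₁.Chainable π₂) {k₁ j₃ t : ℕ}
    (hj : j₃ < π₁.d) (ht : t < Pattern.rk π₁ π₂) :
    keyf π₁ π₂ (mfromval π₁ π₂ k₁ j₃ t) = (k₁, j₃) := by
  have hin := mfromval_inner_lt π₁ π₂ hch hj ht
  unfold keyf mfromval
  refine Prod.ext ?_ ?_
  · exact nat_block_div hin
  · show (k₁ * (π₂.b * π₂.d) + (t * π₁.d + j₃)) % π₁.d = j₃
    rw [nat_block_mod hch.2.1, add_comm, Nat.add_mul_mod_self_right,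
      Nat.mod_eq_of_lt hj]

lemma idxval_mfromval (π₁ π₂ : Pattern) (hch : π₁.Chainable π₂) {k₁ j₃ t : ℕ}
    (hj : j₃ < π₁.d) (ht : t < Pattern.rk π₁ π₂) :
    idxval π₁ π₂ (mfromval π₁ π₂ k₁ j₃ t) = t := by
  have hin := mfromval_inner_lt π₁ π₂ hch hj ht
  unfold idxval mfromval
  rw [nat_block_mod (dvd_refl _), Nat.mod_eq_of_lt hin, nat_block_div hj]

/-- The `t`-th element of the class of `m₀`, as a `Fin`. -/
def mfrom (π₁ π₂ : Pattern) (h₁ : π₁.Pos) (hch : π₁.Chainable π₂)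
    (hdim : π₁.cols = π₂.rows) (m₀ : Fin π₁.cols) (t : Fin (Pattern.rk π₁ π₂)) :
    Fin π₁.cols :=
  ⟨mfromval π₁ π₂ (m₀.1 / (π₂.b * π₂.d)) (m₀.1 % π₁.d) t.1, by
    refine mfromval_lt π₁ π₂ hch hdim ?_ ?_ t.2
    · have h : m₀.1 < π₂.a * (π₂.b * π₂.d) := by
        have := lt_of_lt_of_eq m₀.2 (hABD π₁ π₂ hdim)
        rwa [mul_assoc] at this
      exact Nat.div_lt_of_lt_mul (lt_of_lt_of_eq h (mul_comm _ _))
    · exact Nat.mod_lt _ h₁.2.2.2⟩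

lemma keyf_mfrom (π₁ π₂ : Pattern) (h₁ : π₁.Pos) (hch : π₁.Chainable π₂)
    (hdim : π₁.cols = π₂.rows) (m₀ : Fin π₁.cols) (t : Fin (Pattern.rk π₁ π₂)) :
    keyf π₁ π₂ (mfrom π₁ π₂ h₁ hch hdim m₀ t).1 = keyf π₁ π₂ m₀.1 :=
  keyf_mfromval π₁ π₂ hch (Nat.mod_lt _ h₁.2.2.2) t.2

lemma idxval_mfrom (π₁ π₂ : Pattern) (h₁ : π₁.Pos) (hch : π₁.Chainable π₂)
    (hdim : π₁.cols = π₂.rows) (m₀ : Fin π₁.cols) (t : Fin (Pattern.rk π₁ π₂)) :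
    idxval π₁ π₂ (mfrom π₁ π₂ h₁ hch hdim m₀ t).1 = t.1 :=
  idxval_mfromval π₁ π₂ hch (Nat.mod_lt _ h₁.2.2.2) t.2

lemma mfrom_idx (π₁ π₂ : Pattern) (h₁ : π₁.Pos) (hch : π₁.Chainable π₂)
    (hdim : π₁.cols = π₂.rows) (m₀ m : Fin π₁.cols)
    (hkey : keyf π₁ π₂ m.1 = keyf π₁ π₂ m₀.1) (t : Fin (Pattern.rk π₁ π₂))
    (ht : idxval π₁ π₂ m.1 = t.1) :
    mfrom π₁ π₂ h₁ hch hdim m₀ t = m := by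
  apply Fin.ext
  show mfromval π₁ π₂ (m₀.1 / (π₂.b * π₂.d)) (m₀.1 % π₁.d) t.1 = m.1
  have hk1 : m.1 / (π₂.b * π₂.d) = m₀.1 / (π₂.b * π₂.d) := congrArg Prod.fst hkey
  have hk2 : m.1 % π₁.d = m₀.1 % π₁.d := congrArg Prod.snd hkey
  unfold mfromval
  rw [← hk1, ← hk2, ← ht]
  exact (key_idx_decomp π₁ π₂ hch m.1).symm

/-! ### Summation over a class -/

lemma sum_class (π₁ π₂ : Pattern) (h₁ : π₁.Pos) (h₂ : π₂.Pos) (hch : π₁.Chainable π₂)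
    (hdim : π₁.cols = π₂.rows) (m₀ : Fin π₁.cols) (f : Fin π₁.cols → ℂ)
    (h0 : ∀ m, m ∉ Pof π₁ π₂ hdim m₀ → f m = 0) :
    ∑ m, f m = ∑ t : Fin (Pattern.rk π₁ π₂), f (mfrom π₁ π₂ h₁ hch hdim m₀ t) := by
  have h1 : ∑ m, f m = ∑ m ∈ Pof π₁ π₂ hdim m₀, f m :=
    (Finset.sum_subset (Finset.subset_univ _) fun m _ hm => h0 m hm).symm
  rw [h1]
  refine Finset.sum_nbij' (fun m => (⟨idxval π₁ π₂ m.1, idxval_lt π₁ π₂ h₁ hch m.1⟩ :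
      Fin (Pattern.rk π₁ π₂))) (fun t => mfrom π₁ π₂ h₁ hch hdim m₀ t) ?_ ?_ ?_ ?_ ?_
  · intro m _
    exact Finset.mem_univ _
  · intro t _
    rw [mem_Pof π₁ π₂ h₁ h₂ hch hdim]
    exact keyf_mfrom π₁ π₂ h₁ hch hdim m₀ t
  · intro m hm
    exact mfrom_idx π₁ π₂ h₁ hch hdim m₀ m
      ((mem_Pof π₁ π₂ h₁ h₂ hch hdim m₀ m).1 hm) _ rfl
  · intro t _
    apply Fin.ext
    exact idxval_mfrom π₁ π₂ h₁ hch hdim m₀ t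
  · intro m hm
    rw [mfrom_idx π₁ π₂ h₁ hch hdim m₀ m
      ((mem_Pof π₁ π₂ h₁ h₂ hch hdim m₀ m).1 hm) _ rfl]

lemma card_Pof_le (π₁ π₂ : Pattern) (h₁ : π₁.Pos) (h₂ : π₂.Pos) (hch : π₁.Chainable π₂)
    (hdim : π₁.cols = π₂.rows) (m₀ : Fin π₁.cols) :
    (Pof π₁ π₂ hdim m₀).card ≤ Pattern.rk π₁ π₂ := by
  have h := Finset.card_le_card_of_injOn
    (f := fun m => (⟨idxval π₁ π₂ m.1, idxval_lt π₁ π₂ h₁ hch m.1⟩ :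
      Fin (Pattern.rk π₁ π₂)))
    (s := Pof π₁ π₂ hdim m₀) (t := Finset.univ) (fun m _ => Finset.mem_univ _) ?_
  · simpa using h
  · intro m hm m' hm' he
    have hk : keyf π₁ π₂ m.1 = keyf π₁ π₂ m₀.1 :=
      (mem_Pof π₁ π₂ h₁ h₂ hch hdim m₀ m).1 hm
    have hk' : keyf π₁ π₂ m'.1 = keyf π₁ π₂ m₀.1 :=
      (mem_Pof π₁ π₂ h₁ h₂ hch hdim m₀ m').1 hm'
    have hv : idxval π₁ π₂ m.1 = idxval π₁ π₂ m'.1 := congrArg Fin.val he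
    have e1 := mfrom_idx π₁ π₂ h₁ hch hdim m₀ m hk
      ⟨idxval π₁ π₂ m.1, idxval_lt π₁ π₂ h₁ hch m.1⟩ rfl
    have e2 := mfrom_idx π₁ π₂ h₁ hch hdim m₀ m' hk'
      ⟨idxval π₁ π₂ m.1, idxval_lt π₁ π₂ h₁ hch m.1⟩ hv.symm
    rw [← e1, ← e2]

/-! ### The product support condition -/

/-- The support condition of `S_{π₁ * π₂}` at the level of naturals. -/
def SP (π₁ π₂ : Pattern) (i l : ℕ) : Prop :=
  i / (π₁.b * π₁.d) = l / (π₂.c * π₂.d) / (π₂.a / π₁.a) ∧ i % π₂.d = l % π₂.d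

lemma claimA (π₁ π₂ : Pattern) (h₁ : π₁.Pos) (hch : π₁.Chainable π₂)
    (hdim : π₁.cols = π₂.rows) {i m m' l : ℕ}
    (hs1 : scond π₁.b π₁.c π₁.d i m) (hs2 : scond π₂.b π₂.c π₂.d m' l)
    (hk : keyf π₁ π₂ m = keyf π₁ π₂ m') : SP π₁ π₂ i l := by
  obtain ⟨ha1, hb1⟩ := (scond_iff _ _ _ _ _).1 hs1
  obtain ⟨ha2, hb2⟩ := (scond_iff _ _ _ _ _).1 hs2
  have hk1 : m / (π₂.b * π₂.d) = m' / (π₂.b * π₂.d) := congrArg Prod.fst hk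
  have hk2 : m % π₁.d = m' % π₁.d := congrArg Prod.snd hk
  constructor
  · rw [ha1, div_c1d1_of_key π₁ π₂ h₁ hch hdim, hk1, ha2]
  · have hdd : π₂.d ∣ π₁.d := hch.2.2.2.2.2
    calc i % π₂.d = i % π₁.d % π₂.d := (Nat.mod_mod_of_dvd i hdd).symm
    _ = m' % π₁.d % π₂.d := by rw [hb1, hk2]
    _ = m' % π₂.d := Nat.mod_mod_of_dvd m' hdd
    _ = l % π₂.d := hb2

lemma claimB (π₁ π₂ : Pattern) (h₁ : π₁.Pos) (h₂ : π₂.Pos) (hch : π₁.Chainable π₂)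
    (hdim : π₁.cols = π₂.rows) (i : Fin π₁.rows) (l : Fin π₂.cols)
    (hSP : SP π₁ π₂ i.1 l.1) :
    ∃ m : Fin π₁.cols, scond π₁.b π₁.c π₁.d i.1 m.1 ∧ scond π₂.b π₂.c π₂.d m.1 l.1 := by
  have hd1 : 0 < π₁.d := h₁.2.2.2
  have hbd : 0 < π₂.b * π₂.d := bd_pos π₁ π₂ h₁ hch
  have hk1lt : l.1 / (π₂.c * π₂.d) < π₂.a := by
    have heq : π₂.cols = π₂.c * π₂.d * π₂.a := by
      show π₂.a * π₂.c * π₂.d = _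
      ring
    exact Nat.div_lt_of_lt_mul (lt_of_lt_of_eq l.2 heq)
  have hmod_lt : i.1 % π₁.d < π₂.b * π₂.d :=
    lt_of_lt_of_le (Nat.mod_lt _ hd1) (Nat.le_of_dvd hbd hch.2.1)
  refine ⟨⟨l.1 / (π₂.c * π₂.d) * (π₂.b * π₂.d) + i.1 % π₁.d, ?_⟩, ?_, ?_⟩
  · show _ < π₁.a * π₁.c * π₁.d
    rw [hABD π₁ π₂ hdim, mul_assoc]
    exact nat_block_lt hk1lt hmod_lt
  · rw [scond_iff]
    constructor
    · show i.1 / (π₁.b * π₁.d) = _ / (π₁.c * π₁.d)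
      rw [div_c1d1_of_key π₁ π₂ h₁ hch hdim, nat_block_div hmod_lt]
      exact hSP.1
    · show i.1 % π₁.d = _ % π₁.d
      rw [nat_block_mod hch.2.1, Nat.mod_mod_of_dvd i.1 (dvd_refl π₁.d)]
  · rw [scond_iff]
    constructor
    · show _ / (π₂.b * π₂.d) = _
      rw [nat_block_div hmod_lt]
    · show _ % π₂.d = _
      have hdd : π₂.d ∣ π₁.d := hch.2.2.2.2.2
      rw [nat_block_mod (dvd_trans hdd hch.2.1), Nat.mod_mod_of_dvd i.1 hdd]
      exact hSP.2

lemma Sprod_eq_zero (π₁ π₂ : Pattern) (h₁ : π₁.Pos) (hch : π₁.Chainable π₂)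
    (hr : (π₁ * π₂).rows = π₁.rows) (hc : (π₁ * π₂).cols = π₂.cols)
    (i : Fin π₁.rows) (l : Fin π₂.cols) :
    castMat hr hc (π₁ * π₂).S i l = 0 ↔ ¬ SP π₁ π₂ i.1 l.1 := by
  have h := S_eq_zero (π₁ * π₂) (Fin.cast hr.symm i) (Fin.cast hc.symm l)
  have hb : (π₁ * π₂).b = π₁.b * π₁.d / π₂.d := rfl
  have hcc : (π₁ * π₂).c = π₂.a * π₂.c / π₁.a := rfl
  have hd : (π₁ * π₂).d = π₂.d := rfl
  have hbe : π₁.b * π₁.d / π₂.d * π₂.d = π₁.b * π₁.d :=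
    Nat.div_mul_cancel (dvd_trans hch.2.2.2.2.2 (dvd_mul_left π₁.d π₁.b))
  have hce : π₂.a * π₂.c / π₁.a * π₂.d = π₂.a / π₁.a * (π₂.c * π₂.d) := by
    have ha : π₂.a = π₁.a * (π₂.a / π₁.a) := (Nat.mul_div_cancel' hch.2.2.2.2.1).symm
    have : π₂.a * π₂.c / π₁.a = π₂.a / π₁.a * π₂.c := by
      rw [ha]
      rw [mul_assoc, Nat.mul_div_cancel_left _ h₁.1, Nat.mul_div_cancel_left _ h₁.1]
    rw [this]
    ring
  have hdiv : l.1 / (π₂.a / π₁.a * (π₂.c * π₂.d))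
      = l.1 / (π₂.c * π₂.d) / (π₂.a / π₁.a) := by
    have hcm : π₂.a / π₁.a * (π₂.c * π₂.d) = π₂.c * π₂.d * (π₂.a / π₁.a) := mul_comm _ _
    rw [hcm, ← Nat.div_div_eq_div_mul]
  have hsp : scond (π₁ * π₂).b (π₁ * π₂).c (π₁ * π₂).d i.1 l.1 ↔ SP π₁ π₂ i.1 l.1 := by
    rw [hb, hcc, hd, scond_iff, hbe, hce, hdiv]
    exact Iff.rfl
  rw [show castMat hr hc (π₁ * π₂).S i l
      = (π₁ * π₂).S (Fin.cast hr.symm i) (Fin.cast hc.symm l) from rfl, h]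
  exact not_congr hsp

lemma key_det (π₁ π₂ : Pattern) (h₁ : π₁.Pos) (h₂ : π₂.Pos) (hch : π₁.Chainable π₂)
    (hdim : π₁.cols = π₂.rows) (i : Fin π₁.rows) (l : Fin π₂.cols) (m : Fin π₁.cols)
    (h1 : ∃ ma ∈ Pof π₁ π₂ hdim m, scond π₁.b π₁.c π₁.d i.1 ma.1)
    (h2 : ∃ mb ∈ Pof π₁ π₂ hdim m, scond π₂.b π₂.c π₂.d mb.1 l.1) :
    keyf π₁ π₂ m.1 = (l.1 / (π₂.c * π₂.d), i.1 % π₁.d) := by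
  obtain ⟨ma, hma, hsa⟩ := h1
  obtain ⟨mb, hmb, hsb⟩ := h2
  have hka : keyf π₁ π₂ ma.1 = keyf π₁ π₂ m.1 :=
    (mem_Pof π₁ π₂ h₁ h₂ hch hdim m ma).1 hma
  have hkb : keyf π₁ π₂ mb.1 = keyf π₁ π₂ m.1 :=
    (mem_Pof π₁ π₂ h₁ h₂ hch hdim m mb).1 hmb
  refine Prod.ext ?_ ?_
  · have e1 : mb.1 / (π₂.b * π₂.d) = l.1 / (π₂.c * π₂.d) :=
      ((scond_iff _ _ _ _ _).1 hsb).1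
    calc (keyf π₁ π₂ m.1).1 = (keyf π₁ π₂ mb.1).1 := (congrArg Prod.fst hkb).symm
    _ = mb.1 / (π₂.b * π₂.d) := rfl
    _ = l.1 / (π₂.c * π₂.d) := e1
  · have e2 : i.1 % π₁.d = ma.1 % π₁.d := hsa.2
    calc (keyf π₁ π₂ m.1).2 = (keyf π₁ π₂ ma.1).2 := (congrArg Prod.snd hka).symm
    _ = ma.1 % π₁.d := rfl
    _ = i.1 % π₁.d := e2.symm

/-- **Lemma.** For a chainable pair `(π₁, π₂)`, a matrix `A` is a product of a `π₁`-factor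
and a `π₂`-factor if and only if its support is contained in that of `S_{π₁*π₂}` and all of
its blocks `A[R_P, C_P]` have rank at most `r(π₁, π₂)`. -/
theorem two_factor_characterization (π₁ π₂ : Pattern)
    (h₁ : π₁.Pos) (h₂ : π₂.Pos) (hch : Pattern.Chainable π₁ π₂)
    (hdim : π₁.cols = π₂.rows)
    (hr : (π₁ * π₂).rows = π₁.rows) (hc : (π₁ * π₂).cols = π₂.cols)
    (A : Matrix (Fin π₁.rows) (Fin π₂.cols) ℂ) :
    (∃ (X₁ : Matrix (Fin π₁.rows) (Fin π₁.cols) ℂ)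
        (X₂ : Matrix (Fin π₂.rows) (Fin π₂.cols) ℂ),
        IsFactor π₁ X₁ ∧ IsFactor π₂ X₂ ∧ A = X₁ * castMat hdim.symm rfl X₂) ↔
      ((∀ i j, castMat hr hc (π₁ * π₂).S i j = 0 → A i j = 0) ∧
        ∀ P ∈ classes π₁.S (castMat hdim.symm rfl π₂.S),
          (subm A (rowSupp π₁.S (castMat hdim.symm rfl π₂.S) P)
              (colSupp π₁.S (castMat hdim.symm rfl π₂.S) P)).rank ≤
            Pattern.rk π₁ π₂) := by
  classical
  have hS2 : castMat hdim.symm rfl π₂.S = S2 π₁ π₂ hdim := rfl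
  rw [hS2]
  constructor
  · rintro ⟨X₁, X₂, hF1, hF2, rfl⟩
    set X₂' := castMat hdim.symm rfl X₂ with hX2'
    have hX1 : ∀ (i : Fin π₁.rows) (m : Fin π₁.cols),
        ¬ scond π₁.b π₁.c π₁.d i.1 m.1 → X₁ i m = 0 :=
      fun i m h => hF1 i m ((S_eq_zero π₁ i m).2 h)
    have hX2 : ∀ (m : Fin π₁.cols) (l : Fin π₂.cols),
        ¬ scond π₂.b π₂.c π₂.d m.1 l.1 → X₂' m l = 0 :=
      fun m l h => hF2 (Fin.cast hdim m) l ((S_eq_zero π₂ (Fin.cast hdim m) l).2 h)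
    constructor
    · intro i l hz
      rw [Sprod_eq_zero π₁ π₂ h₁ hch hr hc i l] at hz
      rw [Matrix.mul_apply]
      refine Finset.sum_eq_zero fun m _ => ?_
      by_contra hne
      obtain ⟨hn1, hn2⟩ := mul_ne_zero_iff.1 hne
      have hs1 : scond π₁.b π₁.c π₁.d i.1 m.1 := by
        by_contra hq; exact hn1 (hX1 i m hq)
      have hs2 : scond π₂.b π₂.c π₂.d m.1 l.1 := by
        by_contra hq; exact hn2 (hX2 m l hq)
      exact hz (claimA π₁ π₂ h₁ hch hdim hs1 hs2 rfl)
    · intro P hP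
      obtain ⟨m₀, rfl⟩ := classes_eq_Pof π₁ π₂ hdim P hP
      have hzero : ∀ (i : Fin π₁.rows),
          i ∈ rowSupp π₁.S (S2 π₁ π₂ hdim) (Pof π₁ π₂ hdim m₀) →
          ∀ (l : Fin π₂.cols),
          l ∈ colSupp π₁.S (S2 π₁ π₂ hdim) (Pof π₁ π₂ hdim m₀) →
          ∀ m : Fin π₁.cols, m ∉ Pof π₁ π₂ hdim m₀ → X₁ i m * X₂' m l = 0 := by
        intro i hi l hl m hm
        by_contra hne
        obtain ⟨hn1, hn2⟩ := mul_ne_zero_iff.1 hne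
        have hs1 : scond π₁.b π₁.c π₁.d i.1 m.1 := by
          by_contra hq; exact hn1 (hX1 i m hq)
        have hs2 : scond π₂.b π₂.c π₂.d m.1 l.1 := by
          by_contra hq; exact hn2 (hX2 m l hq)
        apply hm
        rw [mem_Pof π₁ π₂ h₁ h₂ hch hdim]
        have e0 := key_det π₁ π₂ h₁ h₂ hch hdim i l m₀
          ((mem_rowSupp π₁ π₂ h₂ hdim _ i).1 hi)
          ((mem_colSupp π₁ π₂ h₁ hdim _ l).1 hl)
        have e1 : keyf π₁ π₂ m.1 = (l.1 / (π₂.c * π₂.d), i.1 % π₁.d) := by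
          refine Prod.ext ?_ ?_
          · exact ((scond_iff _ _ _ _ _).1 hs2).1
          · exact hs1.2.symm
        rw [e0, e1]
      have hsub : subm (X₁ * X₂')
            (rowSupp π₁.S (S2 π₁ π₂ hdim) (Pof π₁ π₂ hdim m₀))
            (colSupp π₁.S (S2 π₁ π₂ hdim) (Pof π₁ π₂ hdim m₀))
          = (Matrix.of fun (i : ↥(rowSupp π₁.S (S2 π₁ π₂ hdim) (Pof π₁ π₂ hdim m₀)))
              (m : ↥(Pof π₁ π₂ hdim m₀)) => X₁ i.1 m.1) *
            (Matrix.of fun (m : ↥(Pof π₁ π₂ hdim m₀))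
              (l : ↥(colSupp π₁.S (S2 π₁ π₂ hdim) (Pof π₁ π₂ hdim m₀))) =>
              X₂' m.1 l.1) := by
        ext i l
        show (X₁ * X₂') i.1 l.1 = _
        rw [Matrix.mul_apply, Matrix.mul_apply]
        have hcs : ∑ (m : ↥(Pof π₁ π₂ hdim m₀)), X₁ i.1 m.1 * X₂' m.1 l.1
            = ∑ m ∈ Pof π₁ π₂ hdim m₀, X₁ i.1 m * X₂' m l.1 :=
          Finset.sum_coe_sort (Pof π₁ π₂ hdim m₀) (fun m => X₁ i.1 m * X₂' m l.1)
        have hext : ∑ m ∈ Pof π₁ π₂ hdim m₀, X₁ i.1 m * X₂' m l.1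
            = ∑ m : Fin π₁.cols, X₁ i.1 m * X₂' m l.1 :=
          Finset.sum_subset (Finset.subset_univ _)
            (fun m _ hm => hzero i.1 i.2 l.1 l.2 m hm)
        rw [show ∑ (m : ↥(Pof π₁ π₂ hdim m₀)), (Matrix.of fun i m => X₁ i.1 m.1) i m *
            (Matrix.of fun m l => X₂' m.1 l.1) m l
            = ∑ (m : ↥(Pof π₁ π₂ hdim m₀)), X₁ i.1 m.1 * X₂' m.1 l.1 from rfl,
          hcs, hext]
      rw [hsub]
      refine le_trans (Matrix.rank_mul_le_right _ _) ?_
      refine le_trans (Matrix.rank_le_card_height _) ?_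
      rw [Fintype.card_coe]
      exact card_Pof_le π₁ π₂ h₁ h₂ hch hdim m₀
  · rintro ⟨hsupp, hrank⟩
    have hfac : ∀ P ∈ classes π₁.S (S2 π₁ π₂ hdim),
        ∃ (β : Fin π₁.rows → Fin (Pattern.rk π₁ π₂) → ℂ)
          (γ : Fin (Pattern.rk π₁ π₂) → Fin π₂.cols → ℂ),
          ∀ i, i ∈ rowSupp π₁.S (S2 π₁ π₂ hdim) P →
          ∀ l, l ∈ colSupp π₁.S (S2 π₁ π₂ hdim) P →
            A i l = ∑ t, β i t * γ t l := by
      intro P hP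
      obtain ⟨B, C, hBC⟩ := exists_factorization
        (subm A (rowSupp π₁.S (S2 π₁ π₂ hdim) P) (colSupp π₁.S (S2 π₁ π₂ hdim) P))
        _ (hrank P hP)
      refine ⟨fun i t => if h : i ∈ rowSupp π₁.S (S2 π₁ π₂ hdim) P then B ⟨i, h⟩ t else 0,
        fun t l => if h : l ∈ colSupp π₁.S (S2 π₁ π₂ hdim) P then C t ⟨l, h⟩ else 0, ?_⟩
      intro i hi l hl
      have h1 : A i l = (B * C) ⟨i, hi⟩ ⟨l, hl⟩ := by rw [← hBC]; rfl
      rw [h1, Matrix.mul_apply]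
      exact Finset.sum_congr rfl fun t _ => by simp only [dif_pos hi, dif_pos hl]
    choose! β γ hβγ using hfac
    refine ⟨Matrix.of fun i m =>
        if i ∈ rowSupp π₁.S (S2 π₁ π₂ hdim) (Pof π₁ π₂ hdim m) then
          β (Pof π₁ π₂ hdim m) i ⟨idxval π₁ π₂ m.1, idxval_lt π₁ π₂ h₁ hch m.1⟩ else 0,
      castMat hdim rfl (Matrix.of fun m l =>
        if l ∈ colSupp π₁.S (S2 π₁ π₂ hdim) (Pof π₁ π₂ hdim m) then
          γ (Pof π₁ π₂ hdim m) ⟨idxval π₁ π₂ m.1, idxval_lt π₁ π₂ h₁ hch m.1⟩ l else 0),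
      ?_, ?_, ?_⟩
    · intro i m hz
      rw [S_eq_zero] at hz
      have hnm : i ∉ rowSupp π₁.S (S2 π₁ π₂ hdim) (Pof π₁ π₂ hdim m) := by
        intro hmem
        obtain ⟨ma, hma, hsa⟩ := (mem_rowSupp π₁ π₂ h₂ hdim _ i).1 hmem
        exact hz ((scond_congr_left π₁ π₂ h₁ hch hdim
          ((mem_Pof π₁ π₂ h₁ h₂ hch hdim m ma).1 hma) i.1).1 hsa)
      exact if_neg hnm
    · intro k l hz
      rw [S_eq_zero] at hz
      show (if l ∈ colSupp π₁.S (S2 π₁ π₂ hdim)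
            (Pof π₁ π₂ hdim (Fin.cast hdim.symm k)) then _ else 0) = 0
      have hnm : l ∉ colSupp π₁.S (S2 π₁ π₂ hdim)
          (Pof π₁ π₂ hdim (Fin.cast hdim.symm k)) := by
        intro hmem
        obtain ⟨mb, hmb, hsb⟩ := (mem_colSupp π₁ π₂ h₁ hdim _ l).1 hmem
        exact hz ((scond_congr_right π₁ π₂ hch
          ((mem_Pof π₁ π₂ h₁ h₂ hch hdim _ mb).1 hmb) l.1).1 hsb)
      exact if_neg hnm
    · ext i l
      rw [show castMat hdim.symm rfl (castMat hdim rfl (Matrix.of fun m l =>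
          if l ∈ colSupp π₁.S (S2 π₁ π₂ hdim) (Pof π₁ π₂ hdim m) then
            γ (Pof π₁ π₂ hdim m) ⟨idxval π₁ π₂ m.1, idxval_lt π₁ π₂ h₁ hch m.1⟩ l else 0))
          = (Matrix.of fun m l =>
          if l ∈ colSupp π₁.S (S2 π₁ π₂ hdim) (Pof π₁ π₂ hdim m) then
            γ (Pof π₁ π₂ hdim m) ⟨idxval π₁ π₂ m.1, idxval_lt π₁ π₂ h₁ hch m.1⟩ l else 0)
        from rfl]
      rw [Matrix.mul_apply]
      by_cases hSP : SP π₁ π₂ i.1 l.1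
      · obtain ⟨mst, hs1, hs2⟩ := claimB π₁ π₂ h₁ h₂ hch hdim i l hSP
        have hiR : i ∈ rowSupp π₁.S (S2 π₁ π₂ hdim) (Pof π₁ π₂ hdim mst) :=
          (mem_rowSupp π₁ π₂ h₂ hdim _ i).2 ⟨mst, Pof_self π₁ π₂ hdim mst, hs1⟩
        have hlC : l ∈ colSupp π₁.S (S2 π₁ π₂ hdim) (Pof π₁ π₂ hdim mst) :=
          (mem_colSupp π₁ π₂ h₁ hdim _ l).2 ⟨mst, Pof_self π₁ π₂ hdim mst, hs2⟩
        have hzero : ∀ m, m ∉ Pof π₁ π₂ hdim mst →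
            (Matrix.of fun i m =>
              if i ∈ rowSupp π₁.S (S2 π₁ π₂ hdim) (Pof π₁ π₂ hdim m) then
                β (Pof π₁ π₂ hdim m) i ⟨idxval π₁ π₂ m.1, idxval_lt π₁ π₂ h₁ hch m.1⟩
              else 0) i m *
            (Matrix.of fun m l =>
              if l ∈ colSupp π₁.S (S2 π₁ π₂ hdim) (Pof π₁ π₂ hdim m) then
                γ (Pof π₁ π₂ hdim m) ⟨idxval π₁ π₂ m.1, idxval_lt π₁ π₂ h₁ hch m.1⟩ l
              else 0) m l = 0 := by
          intro m hm
          by_contra hne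
          obtain ⟨hn1, hn2⟩ := mul_ne_zero_iff.1 hne
          have hmem1 : i ∈ rowSupp π₁.S (S2 π₁ π₂ hdim) (Pof π₁ π₂ hdim m) := by
            by_contra hq
            exact hn1 (if_neg hq)
          have hmem2 : l ∈ colSupp π₁.S (S2 π₁ π₂ hdim) (Pof π₁ π₂ hdim m) := by
            by_contra hq
            exact hn2 (if_neg hq)
          apply hm
          rw [mem_Pof π₁ π₂ h₁ h₂ hch hdim]
          have e1 := key_det π₁ π₂ h₁ h₂ hch hdim i l m
            ((mem_rowSupp π₁ π₂ h₂ hdim _ i).1 hmem1)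
            ((mem_colSupp π₁ π₂ h₁ hdim _ l).1 hmem2)
          have e2 := key_det π₁ π₂ h₁ h₂ hch hdim i l mst
            ⟨mst, Pof_self π₁ π₂ hdim mst, hs1⟩
            ⟨mst, Pof_self π₁ π₂ hdim mst, hs2⟩
          rw [e1, e2]
        rw [sum_class π₁ π₂ h₁ h₂ hch hdim mst _ hzero]
        rw [hβγ (Pof π₁ π₂ hdim mst) (Pof_mem_classes π₁ π₂ hdim mst) i hiR l hlC]
        refine Finset.sum_congr rfl fun t _ => ?_
        have hmem : mfrom π₁ π₂ h₁ hch hdim mst t ∈ Pof π₁ π₂ hdim mst :=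
          (mem_Pof π₁ π₂ h₁ h₂ hch hdim mst _).2 (keyf_mfrom π₁ π₂ h₁ hch hdim mst t)
        have hPe : Pof π₁ π₂ hdim (mfrom π₁ π₂ h₁ hch hdim mst t)
            = Pof π₁ π₂ hdim mst := Pof_congr π₁ π₂ hdim hmem
        have hidx : (⟨idxval π₁ π₂ (mfrom π₁ π₂ h₁ hch hdim mst t).1,
            idxval_lt π₁ π₂ h₁ hch _⟩ : Fin (Pattern.rk π₁ π₂)) = t :=
          Fin.ext (idxval_mfrom π₁ π₂ h₁ hch hdim mst t)
        show β (Pof π₁ π₂ hdim mst) i t * γ (Pof π₁ π₂ hdim mst) t l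
            = (if i ∈ rowSupp π₁.S (S2 π₁ π₂ hdim)
                  (Pof π₁ π₂ hdim (mfrom π₁ π₂ h₁ hch hdim mst t)) then
                β (Pof π₁ π₂ hdim (mfrom π₁ π₂ h₁ hch hdim mst t)) i
                  ⟨idxval π₁ π₂ (mfrom π₁ π₂ h₁ hch hdim mst t).1,
                    idxval_lt π₁ π₂ h₁ hch _⟩ else 0) *
              (if l ∈ colSupp π₁.S (S2 π₁ π₂ hdim)
                  (Pof π₁ π₂ hdim (mfrom π₁ π₂ h₁ hch hdim mst t)) then
                γ (Pof π₁ π₂ hdim (mfrom π₁ π₂ h₁ hch hdim mst t))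
                  ⟨idxval π₁ π₂ (mfrom π₁ π₂ h₁ hch hdim mst t).1,
                    idxval_lt π₁ π₂ h₁ hch _⟩ l else 0)
        rw [hPe, hidx, if_pos hiR, if_pos hlC]
      · have hz : castMat hr hc (π₁ * π₂).S i l = 0 :=
          (Sprod_eq_zero π₁ π₂ h₁ hch hr hc i l).2 hSP
        rw [hsupp i l hz]
        symm
        refine Finset.sum_eq_zero fun m _ => ?_
        by_contra hne
        obtain ⟨hn1, hn2⟩ := mul_ne_zero_iff.1 hne
        have hmem1 : i ∈ rowSupp π₁.S (S2 π₁ π₂ hdim) (Pof π₁ π₂ hdim m) := by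
          by_contra hq
          exact hn1 (if_neg hq)
        have hmem2 : l ∈ colSupp π₁.S (S2 π₁ π₂ hdim) (Pof π₁ π₂ hdim m) := by
          by_contra hq
          exact hn2 (if_neg hq)
        obtain ⟨ma, hma, hsa⟩ := (mem_rowSupp π₁ π₂ h₂ hdim _ i).1 hmem1
        obtain ⟨mb, hmb, hsb⟩ := (mem_colSupp π₁ π₂ h₁ hdim _ l).1 hmem2
        have hka : keyf π₁ π₂ ma.1 = keyf π₁ π₂ m.1 :=
          (mem_Pof π₁ π₂ h₁ h₂ hch hdim m ma).1 hma
        have hkb : keyf π₁ π₂ mb.1 = keyf π₁ π₂ m.1 :=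
          (mem_Pof π₁ π₂ h₁ h₂ hch hdim m mb).1 hmb
        exact hSP (claimA π₁ π₂ h₁ hch hdim hsa hsb (hka.trans hkb.symm))
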